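/- Let g, γ be real numbers with g ≠ 0, gγ > −2, g + n ≠ 0 and gγ + n ≠ 0 for all n ≥ 0, let u^{(g,γ)} be the quasi-definite Bessel–Laguerre bivariate moment functional, and let λ ∈ ℝ be such that λ_n = 1 + λ(−1)^n (g)_n/(n! g Γ(gγ)) ≠ 0 for all n ≥ 0, so that v^{(g,γ)} = u^{(g,γ)} + λ δ_{(0,0)} is quasi-definite. Then the orthogonal polynomials of v^{(g,γ)} obtained from the Uvarov connection formula satisfy Q^{(g,γ)}_{n,m}(x,y) = P^{(g,γ)}_{n,m}(x,y) for all 0 < m ≤ n, while Q^{(g,γ)}_{n,0}(x,y) = B_n^{(g,−g)}(x) − ( λ̃ / (1 + λ̃ K_{n−1}(b^{(g,−g)}; 0, 0)) ) K_{n−1}(b^{(g,−g)}; 0, x), where λ̃ = λ/Γ(gγ); that is, Q^{(g,γ)}_{n,0} depends only on x and coincides with the n-th orthogonal polynomial of the univariate Uvarov modification b^{(g,−g)} + λ̃ δ_0 of the Bessel moment functional. -/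

import Mathlib

open MvPolynomial Matrix

/-- The index set for monomials of total degree `n` in `d` variables:
multi-indices (exponent tuples) summing to `n`. Its cardinality is `r_n^d = C(n+d-1,n)`. -/
abbrev Idx (d n : ℕ) : Type := {ν : Fin d → ℕ // ν ∈ Finset.Nat.antidiagonalTuple d n}

/-- The monomial `x^ν` associated with a multi-index `ν` of total degree `n`;
the family `fun α : Idx d n => monIdx α` is the canonical vector `𝕏_n`. -/
noncomputable def monIdx {d n : ℕ} (α : Idx d n) : MvPolynomial (Fin d) ℝ :=
  MvPolynomial.monomial (Finsupp.equivFunOnFinite.symm α.1) 1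

/-- A polynomial system (PS): a sequence of vectors `ℙ_n` of size `r_n^d` whose
entries are polynomials of total degree `n`, the entries of `ℙ_0,…,ℙ_n` forming a
basis of the polynomials of total degree at most `n`. -/
structure PolySystem (d : ℕ) where
  vec : (n : ℕ) → Idx d n → MvPolynomial (Fin d) ℝ
  degree_eq : ∀ n α, (vec n α).totalDegree = n
  indep : LinearIndependent ℝ (fun p : (Σ n : ℕ, Idx d n) => vec p.1 p.2)
  spans : ∀ (n : ℕ) (p : MvPolynomial (Fin d) ℝ), p.totalDegree ≤ n →
    p ∈ Submodule.span ℝ {q | ∃ m ≤ n, ∃ α : Idx d m, q = vec m α}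

/-- `{ℙ_n}` is an orthogonal polynomial system (OPS) with respect to the moment
functional `u` : `⟨u, 𝕏_m ℙ_n^t⟩ = 0` for `m < n` and `⟨u, 𝕏_n ℙ_n^t⟩` nonsingular. -/
def IsOPS {d : ℕ} (u : MvPolynomial (Fin d) ℝ →ₗ[ℝ] ℝ) (P : PolySystem d) : Prop :=
  (∀ m n : ℕ, m < n → ∀ (α : Idx d m) (β : Idx d n), u (monIdx α * P.vec n β) = 0) ∧
  (∀ n : ℕ, IsUnit (Matrix.of fun α β : Idx d n => u (monIdx α * P.vec n β)).det)

/-- `u` is quasi-definite iff it admits an OPS. -/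
def QuasiDefinite {d : ℕ} (u : MvPolynomial (Fin d) ℝ →ₗ[ℝ] ℝ) : Prop :=
  ∃ P : PolySystem d, IsOPS u P

/-- `H_n = ⟨u, ℙ_n ℙ_n^t⟩`. -/
noncomputable def Hmat {d : ℕ} (u : MvPolynomial (Fin d) ℝ →ₗ[ℝ] ℝ) (P : PolySystem d)
    (n : ℕ) : Matrix (Idx d n) (Idx d n) ℝ :=
  Matrix.of fun α β => u (P.vec n α * P.vec n β)

/-- `P_m(u;x,y) = ℙ_m(x)^t H_m⁻¹ ℙ_m(y)`. -/
noncomputable def kerP {d : ℕ} (u : MvPolynomial (Fin d) ℝ →ₗ[ℝ] ℝ) (P : PolySystem d)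
    (m : ℕ) (x y : Fin d → ℝ) : ℝ :=
  ∑ α, ∑ β, eval x (P.vec m α) * (Hmat u P m)⁻¹ α β * eval y (P.vec m β)

/-- `kerLT u P n = K_{n-1}(u;·,·) = Σ_{m<n} P_m(u;·,·)`, so that `kerLT u P 0 = K_{-1} = 0`. -/
noncomputable def kerLT {d : ℕ} (u : MvPolynomial (Fin d) ℝ →ₗ[ℝ] ℝ) (P : PolySystem d)
    (n : ℕ) (x y : Fin d → ℝ) : ℝ :=
  ∑ m ∈ Finset.range n, kerP u P m x y

/-- `𝖯_n(ξ) = (ℙ_n(ξ_1)|⋯|ℙ_n(ξ_N))`. -/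
noncomputable def Pmat {d N : ℕ} (P : PolySystem d) (ξ : Fin N → (Fin d → ℝ)) (n : ℕ) :
    Matrix (Idx d n) (Fin N) ℝ :=
  Matrix.of fun α i => eval (ξ i) (P.vec n α)

/-- `Kmat u P ξ n = 𝒦_{n-1} = (K_{n-1}(u;ξ_i,ξ_j))_{i,j}`, with `𝒦_{-1} = 0`. -/
noncomputable def Kmat {d N : ℕ} (u : MvPolynomial (Fin d) ℝ →ₗ[ℝ] ℝ) (P : PolySystem d)
    (ξ : Fin N → (Fin d → ℝ)) (n : ℕ) : Matrix (Fin N) (Fin N) ℝ :=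
  Matrix.of fun i j => kerLT u P n (ξ i) (ξ j)

/-- `Kvec u P ξ n x = 𝖪_{n-1}(ξ,x) = (K_{n-1}(u;ξ_1,x),…,K_{n-1}(u;ξ_N,x))^t`, with `𝖪_{-1}=0`. -/
noncomputable def Kvec {d N : ℕ} (u : MvPolynomial (Fin d) ℝ →ₗ[ℝ] ℝ) (P : PolySystem d)
    (ξ : Fin N → (Fin d → ℝ)) (n : ℕ) (x : Fin d → ℝ) : Fin N → ℝ :=
  fun i => kerLT u P n (ξ i) x

/-- A PS is monic if the degree-`n` homogeneous part of the entry of `ℙ_n` indexed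
by `α` is exactly the monomial `x^α`. -/
def PolySystem.IsMonic {d : ℕ} (P : PolySystem d) : Prop :=
  ∀ (n : ℕ) (α : Idx d n) (ν : Fin d →₀ ℕ), (ν.sum fun _ e => e) = n →
    MvPolynomial.coeff ν (P.vec n α) = if ν = Finsupp.equivFunOnFinite.symm α.1 then 1 else 0

/-- Multiplication of a real matrix times a vector of polynomials. -/
noncomputable def matVec {d : ℕ} {a b : Type} [Fintype b] (M : Matrix a b ℝ)
    (w : b → MvPolynomial (Fin d) ℝ) (i : a) : MvPolynomial (Fin d) ℝ :=
  ∑ j, M i j • w j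

/-- The matrix `L_{n,i}` determined by `x_i 𝕏_n = L_{n,i} 𝕏_{n+1}`. -/
noncomputable def Lmat (d n : ℕ) (i : Fin d) : Matrix (Idx d n) (Idx d (n + 1)) ℝ :=
  Matrix.of fun α β => if β.1 = (fun j => α.1 j + if j = i then 1 else 0) then 1 else 0

/-- The unique multi-index of degree 0. -/
def zeroIdx {d : ℕ} : Idx d 0 :=
  ⟨fun _ => 0, by simp [Finset.Nat.mem_antidiagonalTuple]⟩

/-- The degree-2 multi-index `e_i + e_j`. -/
def e2 {d : ℕ} (i j : Fin d) : Idx d 2 :=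
  ⟨fun k => (if k = i then 1 else 0) + (if k = j then 1 else 0), by
    simp [Finset.Nat.mem_antidiagonalTuple, Finset.sum_add_distrib]⟩

/-- `A_{h,2} = Σ_{1≤i≤j≤d} a^{(2)}_{ij} L_{h,j} L_{h+1,i}`. -/
noncomputable def Amat2 {d : ℕ} (a2 : Idx d 2 → ℝ) (h : ℕ) :
    Matrix (Idx d h) (Idx d (h + 2)) ℝ :=
  ∑ i : Fin d, ∑ j : Fin d,
    if i ≤ j then a2 (e2 i j) • (Lmat d h j * Lmat d (h + 1) i) else 0

/-- The polynomial `λ(x) = a_2·𝕏_2 + a_1·𝕏_1 + a_0`. -/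
noncomputable def lamPoly {d : ℕ} (a2 : Idx d 2 → ℝ) (a1 : Idx d 1 → ℝ) (a0 : ℝ) :
    MvPolynomial (Fin d) ℝ :=
  (∑ α : Idx d 2, a2 α • monIdx α) + (∑ α : Idx d 1, a1 α • monIdx α) + MvPolynomial.C a0

/-- Generalized binomial coefficient `C(a,k) = a(a-1)⋯(a-k+1)/k!` for real `a`. -/
noncomputable def genBinom (a : ℝ) (k : ℕ) : ℝ :=
  (∏ j ∈ Finset.range k, (a - j)) / (Nat.factorial k)

/-- The Pochhammer symbol `(a)_m = a(a+1)⋯(a+m-1)`. -/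
noncomputable def poch (a : ℝ) (m : ℕ) : ℝ := (ascPochhammer ℝ m).eval a

/-- The classical Bessel polynomial `B_n^{(a,b)}(z) = Σ_{k=0}^n C(n,k)(n+a-1)_k (z/b)^k`,
normalized by `B_n^{(a,b)}(0) = 1`. -/
noncomputable def besselPoly (a b : ℝ) (n : ℕ) : Polynomial ℝ :=
  ∑ k ∈ Finset.range (n + 1),
    Polynomial.C ((n.choose k : ℝ) * poch ((n : ℝ) + a - 1) k * (1 / b) ^ k) *
      Polynomial.X ^ k

/-- `h_n^{(a,b)} = (-1)^{n+1} n! b / ((2n+a-1)(a)_{n-1})`, written with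
`(a)_{n-1} = (a)_n/(a+n-1)` so that it is also meaningful for `n = 0`. -/
noncomputable def hBessel (a b : ℝ) (n : ℕ) : ℝ :=
  (-1) ^ (n + 1) * (Nat.factorial n : ℝ) * b * (a + (n : ℝ) - 1) /
    ((2 * (n : ℝ) + a - 1) * poch a n)

/-- `h_m^{(α)} = Γ(α+m+1)/m!`, the squared norm of the Laguerre polynomial `L_m^{(α)}`. -/
noncomputable def hLag (α : ℝ) (m : ℕ) : ℝ :=
  Real.Gamma (α + (m : ℝ) + 1) / (Nat.factorial m : ℝ)

/-- The coefficient of `t^k` in the Laguerre polynomial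
`L_m^{(α)}(t) = Σ_{k=0}^m (-1)^k C(m+α,m-k) t^k/k!`. -/
noncomputable def lagCoef (α : ℝ) (m k : ℕ) : ℝ :=
  (-1) ^ k * genBinom ((m : ℝ) + α) (m - k) / (Nat.factorial k : ℝ)

/-- The bivariate polynomial `x^m L_m^{(α)}(g y/x) = Σ_k c_k g^k y^k x^{m-k}`. -/
noncomputable def lagHomog (g α : ℝ) (m : ℕ) : MvPolynomial (Fin 2) ℝ :=
  ∑ k ∈ Finset.range (m + 1), (lagCoef α m k * g ^ k) • (X 1 ^ k * X 0 ^ (m - k))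

/-- `B_n^{(a,b)}(x)` as a bivariate polynomial in the first variable. -/
noncomputable def besselInX (a b : ℝ) (n : ℕ) : MvPolynomial (Fin 2) ℝ :=
  Polynomial.aeval (X 0 : MvPolynomial (Fin 2) ℝ) (besselPoly a b n)

/-- The Bessel–Laguerre polynomial
`P^{(g,γ)}_{n,m}(x,y) = B_{n-m}^{(g+2m,-g)}(x) x^m L_m^{(gγ-1)}(gy/x)`. -/
noncomputable def PBL (g γ : ℝ) (n m : ℕ) : MvPolynomial (Fin 2) ℝ :=
  besselInX (g + 2 * (m : ℝ)) (-g) (n - m) * lagHomog g (g * γ - 1) m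

/-- `h^{(g,γ)}_{n,m} = h_{n-m}^{(g+2m,-g)} h_m^{(gγ-1)}`. -/
noncomputable def hBL (g γ : ℝ) (n m : ℕ) : ℝ :=
  hBessel (g + 2 * (m : ℝ)) (-g) (n - m) * hLag (g * γ - 1) m

/-- The kernel `K_n(u^{(g,γ)};(0,0),·)` built from the Bessel–Laguerre OPS, evaluated
at a point. -/
noncomputable def kerBL (g γ : ℝ) (n : ℕ) (p : Fin 2 → ℝ) : ℝ :=
  ∑ m ∈ Finset.range (n + 1), ∑ k ∈ Finset.range (m + 1),
    eval (fun _ => 0) (PBL g γ m k) * eval p (PBL g γ m k) / hBL g γ m k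

/-- The kernel `K_{n-1}(u^{(g,γ)};(0,0),·)` as a bivariate polynomial (`= 0` for `n = 0`). -/
noncomputable def kerBLPolyLT (g γ : ℝ) (n : ℕ) : MvPolynomial (Fin 2) ℝ :=
  ∑ m ∈ Finset.range n, ∑ k ∈ Finset.range (m + 1),
    (eval (fun _ => 0) (PBL g γ m k) / hBL g γ m k) • PBL g γ m k

/-- The univariate Bessel kernel `K_{n-1}(b^{(a,b)};0,·)` as a polynomial. -/
noncomputable def kerBesselPolyLT (a b : ℝ) (n : ℕ) : Polynomial ℝ :=
  ∑ m ∈ Finset.range n,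
    Polynomial.C ((besselPoly a b m).eval 0 / hBessel a b m) * besselPoly a b m

/-- The orthogonal polynomials of the Uvarov modification `v^{(g,γ)} = u^{(g,γ)} + λδ_{(0,0)}`
obtained from the Uvarov connection formula
`Q_{n,m} = P_{n,m} - (λ P_{n,m}(0,0)/λ_{n-1}) K_{n-1}(u^{(g,γ)};(0,0),·)`. -/
noncomputable def QBL (g γ lam : ℝ) (n m : ℕ) : MvPolynomial (Fin 2) ℝ :=
  PBL g γ n m -
    (lam * eval (fun _ => 0) (PBL g γ n m) /
      (1 + lam * eval (fun _ => 0) (kerBLPolyLT g γ n))) • kerBLPolyLT g γ n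


/-! ### Auxiliary lemmas -/

lemma poch_zero' (a : ℝ) : poch a 0 = 1 := by simp [poch]
lemma poch_succ' (a : ℝ) (n : ℕ) : poch a (n + 1) = poch a n * (a + n) := by
  simp [poch, ascPochhammer_succ_eval]

lemma besselPoly_zeroth (a b : ℝ) : besselPoly a b 0 = 1 := by
  simp [besselPoly, poch]

lemma besselPoly_eval_zero (a b : ℝ) (n : ℕ) : (besselPoly a b n).eval 0 = 1 := by
  rw [besselPoly, Polynomial.eval_finset_sum]
  rw [Finset.sum_eq_single 0]
  · simp [poch]
  · intro k _ hk; simp [zero_pow hk]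
  · simp

lemma eval_aeval_X0 (v : Fin 2 → ℝ) (q : Polynomial ℝ) :
    eval v (Polynomial.aeval (X 0 : MvPolynomial (Fin 2) ℝ) q) = q.eval (v 0) := by
  induction q using Polynomial.induction_on' with
  | add p q hp hq => simp [hp, hq]
  | monomial n a => simp [Polynomial.aeval_monomial]

lemma lagHomog_zeroth (g α : ℝ) : lagHomog g α 0 = 1 := by
  simp [lagHomog, lagCoef, genBinom]

lemma eval0_lagHomog (g α : ℝ) {m : ℕ} (hm : 1 ≤ m) :
    eval (fun _ => (0:ℝ)) (lagHomog g α m) = 0 := by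
  rw [lagHomog, map_sum, Finset.sum_eq_zero]
  intro k hk
  rcases Nat.eq_zero_or_pos k with hk0 | hk0
  · subst hk0
    have : m - 0 ≠ 0 := by omega
    simp only [MvPolynomial.smul_eq_C_mul, _root_.map_mul, map_pow, eval_C, eval_X]
    rw [zero_pow this]
    ring
  · simp [zero_pow (Nat.pos_iff_ne_zero.mp hk0)]

lemma PBL_zeroth (g γ : ℝ) (n : ℕ) :
    PBL g γ n 0 = Polynomial.aeval (X 0 : MvPolynomial (Fin 2) ℝ) (besselPoly g (-g) n) := by
  simp [PBL, besselInX, lagHomog_zeroth]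

lemma eval0_PBL_pos (g γ : ℝ) (n : ℕ) {m : ℕ} (hm : 1 ≤ m) :
    eval (fun _ => (0:ℝ)) (PBL g γ n m) = 0 := by
  rw [PBL, _root_.map_mul, eval0_lagHomog _ _ hm, mul_zero]

lemma eval0_PBL_zeroth (g γ : ℝ) (n : ℕ) :
    eval (fun _ => (0:ℝ)) (PBL g γ n 0) = 1 := by
  rw [PBL_zeroth, eval_aeval_X0, besselPoly_eval_zero]

lemma hLag_zeroth (g γ : ℝ) : hLag (g * γ - 1) 0 = Real.Gamma (g * γ) := by
  simp [hLag]

lemma hBL_zeroth (g γ : ℝ) (m : ℕ) :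
    hBL g γ m 0 = hBessel g (-g) m * Real.Gamma (g * γ) := by
  simp [hBL, hLag_zeroth]

lemma kerBLPolyLT_eq (g γ : ℝ) (n : ℕ) :
    kerBLPolyLT g γ n = (Real.Gamma (g * γ))⁻¹ •
      Polynomial.aeval (X 0 : MvPolynomial (Fin 2) ℝ) (kerBesselPolyLT g (-g) n) := by
  rw [kerBLPolyLT, kerBesselPolyLT, map_sum, Finset.smul_sum]
  refine Finset.sum_congr rfl fun m _ => ?_
  rw [Finset.sum_eq_single 0]
  · rw [eval0_PBL_zeroth, PBL_zeroth, hBL_zeroth, _root_.map_mul, Polynomial.aeval_C,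
      besselPoly_eval_zero, MvPolynomial.algebraMap_eq, ← MvPolynomial.smul_eq_C_mul, smul_smul]
    have hc : (1 : ℝ) / (hBessel g (-g) m * Real.Gamma (g * γ)) =
        (Real.Gamma (g * γ))⁻¹ * (1 / hBessel g (-g) m) := by
      rw [one_div, one_div, mul_inv]; ring
    rw [hc]
  · intro k _ hk
    rw [eval0_PBL_pos g γ m (Nat.one_le_iff_ne_zero.mpr hk), zero_div, zero_smul]
  · intro h; exact absurd (Finset.mem_range.mpr (Nat.succ_pos m)) h

lemma QBL_pos (g γ lam : ℝ) (n : ℕ) {m : ℕ} (hm : 1 ≤ m) :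
    QBL g γ lam n m = PBL g γ n m := by
  rw [QBL, eval0_PBL_pos g γ n hm, mul_zero, zero_div, zero_smul, sub_zero]

lemma eval0_kerBLPolyLT (g γ : ℝ) (n : ℕ) :
    eval (fun _ => (0:ℝ)) (kerBLPolyLT g γ n) =
      (Real.Gamma (g * γ))⁻¹ * (kerBesselPolyLT g (-g) n).eval 0 := by
  rw [kerBLPolyLT_eq, MvPolynomial.smul_eq_C_mul, _root_.map_mul, eval_C, eval_aeval_X0]

lemma QBL_zeroth (g γ lam : ℝ) (n : ℕ) :
    QBL g γ lam n 0 = Polynomial.aeval (X 0 : MvPolynomial (Fin 2) ℝ)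
      (besselPoly g (-g) n -
        Polynomial.C ((lam / Real.Gamma (g * γ)) /
            (1 + (lam / Real.Gamma (g * γ)) * (kerBesselPolyLT g (-g) n).eval 0)) *
          kerBesselPolyLT g (-g) n) := by
  rw [map_sub, _root_.map_mul, Polynomial.aeval_C, MvPolynomial.algebraMap_eq,
    ← MvPolynomial.smul_eq_C_mul, QBL, eval0_PBL_zeroth, PBL_zeroth, eval0_kerBLPolyLT,
    kerBLPolyLT_eq, smul_smul]
  have hc : lam * 1 / (1 + lam * ((Real.Gamma (g * γ))⁻¹ * (kerBesselPolyLT g (-g) n).eval 0)) *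
      (Real.Gamma (g * γ))⁻¹ =
      lam / Real.Gamma (g * γ) /
        (1 + lam / Real.Gamma (g * γ) * (kerBesselPolyLT g (-g) n).eval 0) := by
    ring
  rw [hc]

lemma poch_ne_zero {x : ℝ} {m : ℕ} (h : ∀ i : ℕ, i < m → x + i ≠ 0) : poch x m ≠ 0 := by
  induction m with
  | zero => simp [poch_zero']
  | succ k ih =>
      rw [poch_succ']
      exact mul_ne_zero (ih fun i hi => h i (by omega)) (h k (by omega))

lemma poch_g_ne_zero {g : ℝ} (hgn : ∀ n : ℕ, g + (n : ℝ) ≠ 0) (m : ℕ) : poch g m ≠ 0 :=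
  poch_ne_zero fun i _ => hgn i

lemma poch_shift_ne_zero {g : ℝ} (hgn : ∀ n : ℕ, g + (n : ℝ) ≠ 0) (k : ℕ) :
    poch ((k : ℝ) + g - 1) k ≠ 0 := by
  cases k with
  | zero => simp [poch_zero']
  | succ j =>
      refine poch_ne_zero fun i _ => ?_
      have := hgn (j + i)
      intro h; apply this
      push_cast at h ⊢
      linarith

lemma bessel_lead_ne_zero {g : ℝ} (hg : g ≠ 0) (hgn : ∀ n : ℕ, g + (n : ℝ) ≠ 0) (k : ℕ) :
    ((k.choose k : ℝ) * poch ((k : ℝ) + g - 1) k * (1 / (-g)) ^ k) ≠ 0 := by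
  refine mul_ne_zero (mul_ne_zero ?_ (poch_shift_ne_zero hgn k)) ?_
  · simp
  · exact pow_ne_zero _ (by simp [hg])

lemma X_pow_mem_span_bessel {g : ℝ} (hg : g ≠ 0) (hgn : ∀ n : ℕ, g + (n : ℝ) ≠ 0)
    (n : ℕ) : ∀ k, k < n →
      (Polynomial.X : Polynomial ℝ) ^ k ∈
        Submodule.span ℝ (besselPoly g (-g) '' Set.Iio n) := by
  intro k
  induction k using Nat.strong_induction_on with
  | _ k ih =>
    intro hk
    have hB : besselPoly g (-g) k ∈ Submodule.span ℝ (besselPoly g (-g) '' Set.Iio n) :=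
      Submodule.subset_span ⟨k, hk, rfl⟩
    have hsplit : Polynomial.C ((k.choose k : ℝ) * poch ((k : ℝ) + g - 1) k * (1 / (-g)) ^ k) *
        Polynomial.X ^ k = besselPoly g (-g) k -
          ∑ j ∈ Finset.range k,
            Polynomial.C ((k.choose j : ℝ) * poch ((k : ℝ) + g - 1) j * (1 / (-g)) ^ j) *
              Polynomial.X ^ j := by
      rw [besselPoly, Finset.sum_range_succ]; ring
    have hmem : Polynomial.C ((k.choose k : ℝ) * poch ((k : ℝ) + g - 1) k * (1 / (-g)) ^ k) *
        Polynomial.X ^ k ∈ Submodule.span ℝ (besselPoly g (-g) '' Set.Iio n) := by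
      rw [hsplit]
      refine Submodule.sub_mem _ hB (Submodule.sum_mem _ fun j hj => ?_)
      rw [← Polynomial.smul_eq_C_mul]
      exact Submodule.smul_mem _ _ (ih j (Finset.mem_range.mp hj) (lt_trans (Finset.mem_range.mp hj) hk))
    have hc := bessel_lead_ne_zero hg hgn k
    have := Submodule.smul_mem _ (((k.choose k : ℝ) * poch ((k : ℝ) + g - 1) k * (1 / (-g)) ^ k))⁻¹ hmem
    rwa [← Polynomial.smul_eq_C_mul, smul_smul, inv_mul_cancel₀ hc, one_smul] at this

lemma mem_span_bessel {g : ℝ} (hg : g ≠ 0) (hgn : ∀ n : ℕ, g + (n : ℝ) ≠ 0)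
    (n : ℕ) (p : Polynomial ℝ) (hp : p.degree < (n : ℕ)) :
    p ∈ Submodule.span ℝ (besselPoly g (-g) '' Set.Iio n) := by
  classical
  have h1 : p ∈ Polynomial.degreeLT ℝ n := Polynomial.mem_degreeLT.mpr hp
  rw [Polynomial.degreeLT_eq_span_X_pow] at h1
  refine Submodule.span_le.mpr ?_ h1
  intro q hq
  simp only [Finset.coe_image, Set.mem_image, Finset.mem_coe, Finset.mem_range] at hq
  obtain ⟨k, hk, rfl⟩ := hq
  exact X_pow_mem_span_bessel hg hgn n k hk

lemma g_add_sub_one_ne {g : ℝ} (hg1 : g ≠ 1) (hgn : ∀ n : ℕ, g + (n : ℝ) ≠ 0) (m : ℕ) :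
    g + (m : ℝ) - 1 ≠ 0 := by
  cases m with
  | zero => intro h; apply hg1; push_cast at h; linarith
  | succ k => intro h; apply hgn k; push_cast at h ⊢; linarith

lemma two_m_ne {g : ℝ} (hg1 : g ≠ 1) (hgn : ∀ n : ℕ, g + (n : ℝ) ≠ 0) (m : ℕ) :
    2 * (m : ℝ) + g - 1 ≠ 0 := by
  cases m with
  | zero => intro h; apply hg1; push_cast at h; linarith
  | succ k => intro h; apply hgn (2 * k + 1); push_cast at h ⊢; linarith

lemma hBessel_ne_zero {g : ℝ} (hg : g ≠ 0) (hg1 : g ≠ 1)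
    (hgn : ∀ n : ℕ, g + (n : ℝ) ≠ 0) (m : ℕ) : hBessel g (-g) m ≠ 0 := by
  rw [hBessel]
  apply div_ne_zero
  · refine mul_ne_zero (mul_ne_zero (mul_ne_zero (pow_ne_zero _ (by norm_num)) ?_) (by simpa using hg)) ?_
    · exact_mod_cast Nat.factorial_ne_zero m
    · exact g_add_sub_one_ne hg1 hgn m
  · exact mul_ne_zero (two_m_ne hg1 hgn m) (poch_g_ne_zero hgn m)

lemma hBessel_zeroth_val {g : ℝ} (hg1 : g ≠ 1) : hBessel g (-g) 0 = g := by
  rw [hBessel]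
  have h1 : g - 1 ≠ 0 := sub_ne_zero.mpr hg1
  rw [poch_zero']
  push_cast
  field_simp
  simp only [Nat.factorial_zero, Nat.cast_one, Nat.cast_zero, one_mul, add_zero, zero_mul, zero_add]
  rw [mul_div_assoc, div_self h1, mul_one]

lemma sum_inv_hBessel {g : ℝ} (hg : g ≠ 0) (hg1 : g ≠ 1)
    (hgn : ∀ n : ℕ, g + (n : ℝ) ≠ 0) :
    ∀ n : ℕ, ∑ m ∈ Finset.range (n + 1), (hBessel g (-g) m)⁻¹ =
      (-1) ^ n * poch g n / ((n.factorial : ℝ) * g) := by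
  intro n
  induction n with
  | zero => simp [hBessel_zeroth_val hg1, poch_zero', one_div]
  | succ n ih =>
      rw [Finset.sum_range_succ, ih]
      have hfac : ((n.factorial : ℝ)) ≠ 0 := by exact_mod_cast Nat.factorial_ne_zero n
      have hgn' : g + (n : ℝ) ≠ 0 := hgn n
      have h2 : 2 * ((n:ℝ)+1) + g - 1 ≠ 0 := fun h =>
        (two_m_ne hg1 hgn (n+1)) (by push_cast; linarith)
      have hP : poch g n ≠ 0 := poch_g_ne_zero hgn n
      have e2 : ((-1:ℝ)) ^ (n + 2) = (-1) ^ n := by rw [pow_add]; norm_num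
      have e1 : ((-1:ℝ)) ^ (n + 1) = -((-1) ^ n) := by rw [pow_succ]; ring
      have hval : hBessel g (-g) (n+1) =
          (-1) ^ n * (((n+1).factorial : ℝ)) * (-g) * (g + (n:ℝ)) /
            ((2 * ((n:ℝ)+1) + g - 1) * (poch g n * (g + (n:ℝ)))) := by
        rw [hBessel, poch_succ', show n + 1 + 1 = n + 2 from rfl, e2]
        push_cast
        ring_nf
      rw [hval, inv_div, poch_succ', e1]
      have hfs : (((n+1).factorial : ℝ)) = ((n:ℝ)+1) * (n.factorial : ℝ) := by
        push_cast [Nat.factorial_succ]; ring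
      rw [hfs]
      rcases Nat.even_or_odd n with hpar | hpar
      · rw [hpar.neg_one_pow]
        field_simp
        ring
      · rw [hpar.neg_one_pow]
        field_simp
        ring

lemma kerB_eval_zero (g : ℝ) (n : ℕ) :
    (kerBesselPolyLT g (-g) n).eval 0 = ∑ m ∈ Finset.range n, (hBessel g (-g) m)⁻¹ := by
  rw [kerBesselPolyLT, Polynomial.eval_finset_sum]
  refine Finset.sum_congr rfl fun m _ => ?_
  rw [Polynomial.eval_mul, Polynomial.eval_C, besselPoly_eval_zero, mul_one, one_div]

lemma Delta_ne_zero {g γ lam : ℝ} (hg : g ≠ 0) (hg1 : g ≠ 1)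
    (hgn : ∀ n : ℕ, g + (n : ℝ) ≠ 0)
    (hlam : ∀ n : ℕ, 1 + lam * ((-1) ^ n * poch g n /
      ((Nat.factorial n : ℝ) * g * Real.Gamma (g * γ))) ≠ 0) (n : ℕ) :
    1 + (lam / Real.Gamma (g * γ)) * (kerBesselPolyLT g (-g) n).eval 0 ≠ 0 := by
  cases n with
  | zero => simp [kerBesselPolyLT]
  | succ k =>
      rw [kerB_eval_zero, sum_inv_hBessel hg hg1 hgn k]
      have heq : 1 + (lam / Real.Gamma (g * γ)) *
          ((-1) ^ k * poch g k / ((Nat.factorial k : ℝ) * g)) =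
          1 + lam * ((-1) ^ k * poch g k /
            ((Nat.factorial k : ℝ) * g * Real.Gamma (g * γ))) := by ring
      rw [heq]
      exact hlam k

lemma bfun_ker_mul {g : ℝ} (hg : g ≠ 0) (hg1 : g ≠ 1)
    (hgn : ∀ n : ℕ, g + (n : ℝ) ≠ 0)
    (bfun : Polynomial ℝ →ₗ[ℝ] ℝ)
    (hborth : ∀ n m : ℕ, n ≠ m →
      bfun (besselPoly g (-g) n * besselPoly g (-g) m) = 0)
    (hbnorm : ∀ n : ℕ,
      bfun (besselPoly g (-g) n * besselPoly g (-g) n) = hBessel g (-g) n)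
    {n m : ℕ} (hm : m < n) :
    bfun (kerBesselPolyLT g (-g) n * besselPoly g (-g) m) = 1 := by
  rw [kerBesselPolyLT, Finset.sum_mul, map_sum, Finset.sum_eq_single m]
  · have h1 : Polynomial.C ((besselPoly g (-g) m).eval 0 / hBessel g (-g) m) *
        besselPoly g (-g) m * besselPoly g (-g) m =
        ((hBessel g (-g) m)⁻¹ : ℝ) • (besselPoly g (-g) m * besselPoly g (-g) m) := by
      rw [besselPoly_eval_zero, Polynomial.smul_eq_C_mul, mul_assoc, one_div]
    rw [h1, LinearMap.map_smul, hbnorm, smul_eq_mul, inv_mul_cancel₀ (hBessel_ne_zero hg hg1 hgn m)]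
  · intro j _ hjm
    have h1 : Polynomial.C ((besselPoly g (-g) j).eval 0 / hBessel g (-g) j) *
        besselPoly g (-g) j * besselPoly g (-g) m =
        (((besselPoly g (-g) j).eval 0 / hBessel g (-g) j) : ℝ) •
          (besselPoly g (-g) j * besselPoly g (-g) m) := by
      rw [Polynomial.smul_eq_C_mul, mul_assoc]
    rw [h1, LinearMap.map_smul, hborth j m hjm, smul_zero]
  · intro h; exact absurd (Finset.mem_range.mpr hm) h

lemma g_one_contradiction (lam : ℝ) (bfun : Polynomial ℝ →ₗ[ℝ] ℝ)
    (hborth : ∀ n m : ℕ, n ≠ m →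
      bfun (besselPoly 1 (-1) n * besselPoly 1 (-1) m) = 0)
    (hbnorm : ∀ n : ℕ,
      bfun (besselPoly 1 (-1) n * besselPoly 1 (-1) n) = hBessel 1 (-1) n) : False := by
  have hB0 : besselPoly 1 (-1) 0 = 1 := besselPoly_zeroth 1 (-1)
  have hp10 : poch (1 : ℝ) 0 = 1 := poch_zero' 1
  have hp11 : poch (1 : ℝ) 1 = 1 := by
    simp [poch, ascPochhammer_one]
  have hp20 : poch (2 : ℝ) 0 = 1 := poch_zero' 2
  have hp21 : poch (2 : ℝ) 1 = 2 := by
    simp [poch, ascPochhammer_one]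
  have hp22 : poch (2 : ℝ) 2 = 6 := by
    have h := poch_succ' (2 : ℝ) 1
    rw [show (2:ℕ) = 1 + 1 from rfl, h] at *
    simp [poch, ascPochhammer_one]
    norm_num
  have hB1 : besselPoly 1 (-1) 1 = 1 - Polynomial.X := by
    rw [besselPoly]
    rw [show (1:ℕ) + 1 = 2 from rfl, Finset.sum_range_succ, Finset.sum_range_one]
    norm_num [hp11, hp10]
    ring
  have hB2 : besselPoly 1 (-1) 2 = 1 - Polynomial.C 4 * Polynomial.X +
      Polynomial.C 6 * Polynomial.X ^ 2 := by
    rw [besselPoly]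
    rw [show (2:ℕ) + 1 = 3 from rfl, Finset.sum_range_succ, Finset.sum_range_succ,
      Finset.sum_range_one]
    norm_num [hp20, hp21, hp22]
    ring
  have key : (6:ℝ) • (besselPoly 1 (-1) 1 * besselPoly 1 (-1) 1) =
      (-3:ℝ) • (besselPoly 1 (-1) 0 * besselPoly 1 (-1) 0) +
      (8:ℝ) • besselPoly 1 (-1) 1 + besselPoly 1 (-1) 2 := by
    rw [hB0, hB1, hB2, Polynomial.smul_eq_C_mul, Polynomial.smul_eq_C_mul,
      Polynomial.smul_eq_C_mul]
    simp only [map_ofNat, map_neg]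
    ring
  have h1 : bfun (besselPoly 1 (-1) 1) = 0 := by
    have := hborth 1 0 (by norm_num); rwa [hB0, mul_one] at this
  have h2 : bfun (besselPoly 1 (-1) 2) = 0 := by
    have := hborth 2 0 (by norm_num); rwa [hB0, mul_one] at this
  have h0 : bfun (besselPoly 1 (-1) 0 * besselPoly 1 (-1) 0) = 0 := by
    rw [hbnorm 0, hBessel]
    norm_num
  have hval : hBessel 1 (-1) 1 = -(1/2 : ℝ) := by
    rw [hBessel, hp11]
    norm_num
  have hkey := congrArg bfun key
  rw [map_add, map_add, LinearMap.map_smul, LinearMap.map_smul, LinearMap.map_smul,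
    h0, h1, h2, hbnorm 1, hval] at hkey
  norm_num at hkey

lemma Gamma_gγ_ne_zero {g γ : ℝ} (hgγ : -2 < g * γ)
    (hgγn : ∀ n : ℕ, g * γ + (n : ℝ) ≠ 0) : Real.Gamma (g * γ) ≠ 0 := by
  apply Real.Gamma_ne_zero
  intro m h
  apply hgγn m
  rw [h]; ring

/-- Under the quasi-definiteness condition `λ_n ≠ 0`, the Uvarov
modification of `u^{(g,γ)}` only affects the polynomials with `m = 0`:
`Q^{(g,γ)}_{n,m} = P^{(g,γ)}_{n,m}` for `0 < m ≤ n`, while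
`Q^{(g,γ)}_{n,0}(x,y) = B_n^{(g,-g)}(x) - (λ̃/(1+λ̃K_{n-1}(b^{(g,-g)};0,0)))K_{n-1}(b^{(g,-g)};0,x)`
with `λ̃ = λ/Γ(gγ)`; it depends only on `x` and coincides with the `n`-th orthogonal
polynomial of the univariate Uvarov modification `b^{(g,-g)} + λ̃δ_0`. -/
theorem besselLaguerre_uvarov_connection
    (g γ : ℝ) (hg : g ≠ 0) (hgγ : -2 < g * γ)
    (hgn : ∀ n : ℕ, g + (n : ℝ) ≠ 0) (hgγn : ∀ n : ℕ, g * γ + (n : ℝ) ≠ 0)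
    (u : MvPolynomial (Fin 2) ℝ →ₗ[ℝ] ℝ)
    (horth : ∀ n m n' m' : ℕ, m ≤ n → m' ≤ n' → (n, m) ≠ (n', m') →
      u (PBL g γ n m * PBL g γ n' m') = 0)
    (hnorm : ∀ n m : ℕ, m ≤ n → u (PBL g γ n m * PBL g γ n m) = hBL g γ n m)
    (hspan : ∀ (N : ℕ) (p : MvPolynomial (Fin 2) ℝ), p.totalDegree ≤ N →
      p ∈ Submodule.span ℝ {q | ∃ n ≤ N, ∃ m ≤ n, q = PBL g γ n m})
    (lam : ℝ)
    (hlam : ∀ n : ℕ, 1 + lam * ((-1) ^ n * poch g n /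
      ((Nat.factorial n : ℝ) * g * Real.Gamma (g * γ))) ≠ 0)
    -- the univariate Bessel moment functional `b^{(g,-g)}`:
    (bfun : Polynomial ℝ →ₗ[ℝ] ℝ)
    (hborth : ∀ n m : ℕ, n ≠ m →
      bfun (besselPoly g (-g) n * besselPoly g (-g) m) = 0)
    (hbnorm : ∀ n : ℕ,
      bfun (besselPoly g (-g) n * besselPoly g (-g) n) = hBessel g (-g) n) :
    -- for `0 < m ≤ n` nothing changes:
    (∀ n m : ℕ, 1 ≤ m → m ≤ n → QBL g γ lam n m = PBL g γ n m) ∧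
    -- `Q_{n,0}` is the announced univariate polynomial in `x`:
    (∀ n : ℕ,
      QBL g γ lam n 0 =
        Polynomial.aeval (X 0 : MvPolynomial (Fin 2) ℝ)
          (besselPoly g (-g) n -
            Polynomial.C ((lam / Real.Gamma (g * γ)) /
                (1 + (lam / Real.Gamma (g * γ)) * (kerBesselPolyLT g (-g) n).eval 0)) *
              kerBesselPolyLT g (-g) n)) ∧
    -- and it is orthogonal with respect to the univariate Uvarov modification
    -- `b^{(g,-g)} + λ̃ δ_0`:
    (∀ (n : ℕ) (p : Polynomial ℝ), p.degree < (n : ℕ) →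
      bfun ((besselPoly g (-g) n -
          Polynomial.C ((lam / Real.Gamma (g * γ)) /
              (1 + (lam / Real.Gamma (g * γ)) * (kerBesselPolyLT g (-g) n).eval 0)) *
            kerBesselPolyLT g (-g) n) * p) +
        (lam / Real.Gamma (g * γ)) *
          (((besselPoly g (-g) n -
            Polynomial.C ((lam / Real.Gamma (g * γ)) /
                (1 + (lam / Real.Gamma (g * γ)) * (kerBesselPolyLT g (-g) n).eval 0)) *
              kerBesselPolyLT g (-g) n) * p).eval 0) = 0) := by

  refine ⟨fun n m h1 _ => QBL_pos g γ lam n h1, fun n => QBL_zeroth g γ lam n, ?_⟩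
  rcases eq_or_ne g 1 with hg1 | hg1
  · exfalso
    subst hg1
    exact g_one_contradiction lam bfun hborth hbnorm
  · intro n p hp
    set Γ := Real.Gamma (g * γ) with hΓ
    set K0 := (kerBesselPolyLT g (-g) n).eval 0 with hK0
    set c : ℝ := lam / Γ / (1 + lam / Γ * K0) with hc
    set Qn : Polynomial ℝ :=
      besselPoly g (-g) n - Polynomial.C c * kerBesselPolyLT g (-g) n with hQn
    have hΔ : 1 + lam / Γ * K0 ≠ 0 := Delta_ne_zero hg hg1 hgn hlam n
    have hΓne : Γ ≠ 0 := Gamma_gγ_ne_zero hgγ hgγn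
    have hmem := mem_span_bessel hg hgn n p hp
    set L : Polynomial ℝ →ₗ[ℝ] ℝ :=
      (bfun + (lam / Γ) • Polynomial.leval 0).comp (LinearMap.mulLeft ℝ Qn) with hLdef
    have hL : ∀ q : Polynomial ℝ,
        L q = bfun (Qn * q) + lam / Γ * ((Qn * q).eval 0) := by
      intro q
      simp [hLdef, LinearMap.mulLeft_apply, Polynomial.leval, LinearMap.add_apply,
        LinearMap.smul_apply, smul_eq_mul]
    have hle : Submodule.span ℝ (besselPoly g (-g) '' Set.Iio n) ≤ LinearMap.ker L := by
      rw [Submodule.span_le]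
      rintro q ⟨m, hm, rfl⟩
      have hm' : m < n := Set.mem_Iio.mp hm
      rw [SetLike.mem_coe, LinearMap.mem_ker, hL]
      have e1 : Qn * besselPoly g (-g) m =
          besselPoly g (-g) n * besselPoly g (-g) m -
            Polynomial.C c * (kerBesselPolyLT g (-g) n * besselPoly g (-g) m) := by
        rw [hQn]; ring
      have e3 : (Qn * besselPoly g (-g) m).eval 0 = 1 - c * K0 := by
        rw [Polynomial.eval_mul, besselPoly_eval_zero, mul_one, hQn, Polynomial.eval_sub,
          Polynomial.eval_mul, Polynomial.eval_C, besselPoly_eval_zero, ← hK0]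
      rw [e3, e1, map_sub, hborth n m (Nat.ne_of_gt hm'),
        ← Polynomial.smul_eq_C_mul, LinearMap.map_smul,
        bfun_ker_mul hg hg1 hgn bfun hborth hbnorm hm', smul_eq_mul, mul_one]
      have hsc : c * (1 + lam / Γ * K0) = lam / Γ := by
        rw [hc]; exact div_mul_cancel₀ _ hΔ
      linear_combination -hsc
    have h0 : bfun (Qn * p) + lam / Γ * ((Qn * p).eval 0) = 0 := by
      rw [← hL p]; exact LinearMap.mem_ker.mp (hle hmem)
    exact h0
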